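/- Let A, B, C be Polish spaces, ν a nonnegative countably additive Borel measure on A, and ρ : A × B → ℝ a bounded continuous function such that ρ(·,b)ν is a probability measure on A for every b ∈ B and the pair ((b,a) ↦ ρ(a,b), ν) satisfies Condition C1 (with conditioning variable b ∈ B and integration variable a ∈ A). Let ζ be a Borel probability measure on A × B satisfying ζ(da,db) = ρ(a,b) ν(da) ζ_B(db), where ζ_B is the B-marginal of ζ. Let (κ_n)_{n∈ℕ} be Markov kernels from B to C and define μ_n ∈ P(A×B×C) by μ_n(da,db,dc) = κ_n(b)(dc) ζ(da,db). If μ_n converges weakly to some Borel probability measure μ₀ on A × B × C, then there exists a Markov kernel κ₀ from B to C such that μ₀(da,db,dc) = κ₀(b)(dc) ζ(da,db). -/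

import Mathlib

open MeasureTheory ProbabilityTheory Filter Topology TopologicalSpace
open scoped ENNReal NNReal

noncomputable section

/-- Condition **C1** of the paper: the pair `(η, ν)` consists of a jointly continuous
function `η` together with a "variation control" function `h` which is bounded, has
uniformly bounded `ν`-integrals, and controls the variation of `η` in its first
argument uniformly. -/
def CondC1 {A Y : Type*} [PseudoMetricSpace A] [MeasurableSpace A]
    [TopologicalSpace Y] [MeasurableSpace Y]
    (η : A → Y → ℝ) (ν : Measure Y) : Prop :=
  Continuous (fun p : A × Y => η p.1 p.2) ∧
  ∃ h : A → Y → ℝ,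
    (∀ a y, 0 ≤ h a y) ∧
    Measurable (fun p : A × Y => h p.1 p.2) ∧
    (∃ Cb : ℝ, ∀ a y, h a y ≤ Cb) ∧
    (∃ M : ℝ≥0∞, M ≠ ⊤ ∧ ∀ a, (∫⁻ y, ENNReal.ofReal (h a y) ∂ν) ≤ M) ∧
    (∀ ε : ℝ, 0 < ε → ∃ δ : ℝ, 0 < δ ∧
      ∀ a₀ a : A, dist a a₀ < δ → ∀ y, |η a y - η a₀ y| < ε * h a₀ y)

/-- Weak convergence of a sequence of (Borel) measures: integrals of every bounded
continuous real-valued function converge. -/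
def WeakConv {S : Type*} [TopologicalSpace S] [MeasurableSpace S]
    (μ : ℕ → Measure S) (μ₀ : Measure S) : Prop :=
  ∀ g : BoundedContinuousFunction S ℝ,
    Tendsto (fun n => ∫ x, g x ∂(μ n)) atTop (𝓝 (∫ x, g x ∂μ₀))

lemma aux_ext_bcf {Ω : Type*} [MeasurableSpace Ω] [TopologicalSpace Ω]
    [HasOuterApproxClosed Ω] [BorelSpace Ω] {μ ν : Measure Ω}
    [IsFiniteMeasure μ] [IsFiniteMeasure ν]
    (h : ∀ f : BoundedContinuousFunction Ω ℝ, ∫ x, f x ∂μ = ∫ x, f x ∂ν) : μ = ν := by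
  apply ext_of_forall_lintegral_eq_of_IsFiniteMeasure
  intro f
  have hμ := BoundedContinuousFunction.lintegral_lt_top_of_nnreal μ f
  have hν := BoundedContinuousFunction.lintegral_lt_top_of_nnreal ν f
  have key : (∫⁻ x, f x ∂μ).toReal = (∫⁻ x, f x ∂ν).toReal := by
    rw [BoundedContinuousFunction.toReal_lintegral_coe_eq_integral,
      BoundedContinuousFunction.toReal_lintegral_coe_eq_integral]
    exact h (BoundedContinuousFunction.ofNormedAddCommGroup (fun x => (f x : ℝ))
      (NNReal.continuous_coe.comp f.continuous) (nndist 0 f)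
      (fun x => by
        simpa [Real.norm_of_nonneg (f x).coe_nonneg] using
          (NNReal.coe_le_coe.mpr (f.apply_le_nndist_zero x))))
  exact (ENNReal.toReal_eq_toReal_iff' hμ.ne hν.ne).mp key

lemma aux_integrable_bdd {X : Type*} [MeasurableSpace X] {μ : Measure X} [IsFiniteMeasure μ]
    {f : X → ℝ} (hm : AEStronglyMeasurable f μ) {C : ℝ} (hb : ∀ x, ‖f x‖ ≤ C) :
    Integrable f μ :=
  Integrable.mono' (integrable_const C) hm (Filter.Eventually.of_forall hb)

lemma aux_bind_eq_compProd_map {X Y Z : Type*} [MeasurableSpace X] [MeasurableSpace Y]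
    [MeasurableSpace Z] (μ : Measure X) [SFinite μ] (k : Kernel X Y) [IsSFiniteKernel k]
    (e : X → Y → Z) (he : Measurable fun q : X × Y => e q.1 q.2) :
    μ.bind (fun x => (k x).map (e x)) = (μ ⊗ₘ k).map (fun q => e q.1 q.2) := by
  ext s hs
  have hmeas : Measurable fun x => (k x).map (e x) := by
    apply Measure.measurable_of_measurable_coe
    intro t ht
    have hex : ∀ x, Measurable (e x) := fun x =>
      he.comp measurable_prodMk_left
    have : ∀ x, (k x).map (e x) t = k x (Prod.mk x ⁻¹' ((fun q : X × Y => e q.1 q.2) ⁻¹' t)) := by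
      intro x
      rw [Measure.map_apply (hex x) ht]
      rfl
    simp_rw [this]
    exact Kernel.measurable_kernel_prodMk_left (he ht)
  rw [Measure.bind_apply hs hmeas.aemeasurable, Measure.map_apply he hs,
    Measure.compProd_apply (he hs)]
  congr 1
  ext x
  have hex : Measurable (e x) := he.comp measurable_prodMk_left
  rw [Measure.map_apply hex hs]
  rfl

lemma aux_integrable_of_ofReal {X : Type*} [MeasurableSpace X] {μ : Measure X} {f : X → ℝ}
    (hm : AEStronglyMeasurable f μ) (h0 : ∀ x, 0 ≤ f x)
    (hfin : ∫⁻ x, ENNReal.ofReal (f x) ∂μ ≠ ⊤) : Integrable f μ := by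
  refine ⟨hm, ?_⟩
  rw [hasFiniteIntegral_iff_ofReal (Filter.Eventually.of_forall h0)]
  exact hfin.lt_top

lemma aux_lint_rho_one {A B : Type*} [MeasurableSpace A] {ν : Measure A} {ρ : A → B → ℝ}
    (hρprob : ∀ b, IsProbabilityMeasure (ν.withDensity fun a => ENNReal.ofReal (ρ a b)))
    (b : B) : ∫⁻ a, ENNReal.ofReal (ρ a b) ∂ν = 1 := by
  have := (hρprob b).measure_univ
  rwa [withDensity_apply _ MeasurableSet.univ, Measure.restrict_univ] at this

lemma aux_kernel_meas {A B : Type*} [MetricSpace A] [MeasurableSpace A] [BorelSpace A]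
    [MetricSpace B] [MeasurableSpace B] [BorelSpace B]
    (ν : Measure A) (ρ : A → B → ℝ)
    (hρcont : Continuous fun p : A × B => ρ p.1 p.2)
    (hρprob : ∀ b, IsProbabilityMeasure (ν.withDensity fun a => ENNReal.ofReal (ρ a b)))
    (h : B → A → ℝ)
    (M : ℝ≥0∞) (hM : M ≠ ⊤) (hhM : ∀ b, (∫⁻ a, ENNReal.ofReal (h b a) ∂ν) ≤ M)
    (hmod : ∀ b₀ : B, ∃ δ : ℝ, 0 < δ ∧
      ∀ b : B, dist b b₀ < δ → ∀ a, |ρ a b - ρ a b₀| < 1 * h b₀ a) :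
    Measurable fun b => ν.withDensity fun a => ENNReal.ofReal (ρ a b) := by
  apply Measure.measurable_of_measurable_coe
  intro s hs
  simp_rw [withDensity_apply _ hs]
  suffices hc : Continuous fun b => ∫⁻ a in s, ENNReal.ofReal (ρ a b) ∂ν from hc.measurable
  apply SeqContinuous.continuous
  intro bs b₀ hbs
  obtain ⟨δ, hδ, hδ'⟩ := hmod b₀
  have hca : ∀ b : B, Continuous fun a => ρ a b := fun b =>
    hρcont.comp (continuous_id.prodMk continuous_const)
  apply tendsto_lintegral_filter_of_dominated_convergence
    (fun a => ENNReal.ofReal (ρ a b₀) + ENNReal.ofReal (h b₀ a))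
  · exact Filter.Eventually.of_forall fun k =>
      (ENNReal.continuous_ofReal.comp (hca (bs k))).measurable
  · have hev : ∀ᶠ k in atTop, dist (bs k) b₀ < δ := Metric.tendsto_nhds.mp hbs δ hδ
    filter_upwards [hev] with k hk
    apply Filter.Eventually.of_forall
    intro a
    have habs := hδ' (bs k) hk a
    have : ρ a (bs k) ≤ ρ a b₀ + h b₀ a := by
      have := abs_lt.mp habs
      linarith [this.2]
    exact le_trans (ENNReal.ofReal_le_ofReal this) (ENNReal.ofReal_add_le)
  · have hrest : ∫⁻ a in s, (ENNReal.ofReal (ρ a b₀) + ENNReal.ofReal (h b₀ a)) ∂ν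
        ≤ ∫⁻ a, (ENNReal.ofReal (ρ a b₀) + ENNReal.ofReal (h b₀ a)) ∂ν :=
      lintegral_mono' Measure.restrict_le_self le_rfl
    refine ne_of_lt (lt_of_le_of_lt hrest ?_)
    have hm1 : Measurable fun a => ENNReal.ofReal (ρ a b₀) :=
      (ENNReal.continuous_ofReal.comp (hca b₀)).measurable
    rw [lintegral_add_left hm1]
    rw [aux_lint_rho_one hρprob b₀]
    calc (1 : ℝ≥0∞) + ∫⁻ a, ENNReal.ofReal (h b₀ a) ∂ν ≤ 1 + M := by
          gcongr; exact hhM b₀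
      _ < ⊤ := by
          rw [ENNReal.add_lt_top]
          exact ⟨ENNReal.one_lt_top, hM.lt_top⟩
  · apply Filter.Eventually.of_forall
    intro a
    have hcb : Continuous fun b => ENNReal.ofReal (ρ a b) :=
      ENNReal.continuous_ofReal.comp (hρcont.comp (continuous_const.prodMk continuous_id))
    exact (hcb.continuousAt).tendsto.comp hbs

lemma aux_G_cont {A B D : Type*} [MetricSpace A] [MeasurableSpace A] [BorelSpace A]
    [MetricSpace B] [MeasurableSpace B] [BorelSpace B] [MetricSpace D]
    (ν : Measure A) (ρ : A → B → ℝ)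
    (hρcont : Continuous fun p : A × B => ρ p.1 p.2)
    (hρprob : ∀ b, IsProbabilityMeasure (ν.withDensity fun a => ENNReal.ofReal (ρ a b)))
    (h : B → A → ℝ) (hh0 : ∀ b a, 0 ≤ h b a)
    (hhmeas : Measurable fun p : B × A => h p.1 p.2)
    (M : ℝ≥0∞) (hM : M ≠ ⊤) (hhM : ∀ b, (∫⁻ a, ENNReal.ofReal (h b a) ∂ν) ≤ M)
    (hmod : ∀ b₀ : B, ∃ δ : ℝ, 0 < δ ∧
      ∀ b : B, dist b b₀ < δ → ∀ a, |ρ a b - ρ a b₀| < 1 * h b₀ a)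
    (π : D → B) (hπ : Continuous π)
    (g : A → D → ℝ) (hgc : Continuous fun p : A × D => g p.1 p.2) (Cg : ℝ) (hCg : 0 ≤ Cg)
    (hgb : ∀ a d, |g a d| ≤ Cg) :
    Continuous fun d => ∫ a, g a d ∂(ν.withDensity fun a => ENNReal.ofReal (ρ a (π d))) := by
  have hca : ∀ b : B, Continuous fun a => ρ a b := fun b =>
    hρcont.comp (continuous_id.prodMk continuous_const)
  have hgd : ∀ d : D, Continuous fun a => g a d := fun d =>
    hgc.comp (continuous_id.prodMk continuous_const)
  have hrw : ∀ d : D, ∫ a, g a d ∂(ν.withDensity fun a => ENNReal.ofReal (ρ a (π d)))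
      = ∫ a, ((ρ a (π d)).toNNReal : ℝ) * g a d ∂ν := by
    intro d
    have hmρ : Measurable fun a => (ρ a (π d)).toNNReal :=
      (continuous_real_toNNReal.comp (hca (π d))).measurable
    rw [show (fun a => ENNReal.ofReal (ρ a (π d)))
        = fun a => ((ρ a (π d)).toNNReal : ℝ≥0∞) from rfl,
      integral_withDensity_eq_integral_smul hmρ]
    simp [NNReal.smul_def]
  simp_rw [hrw]
  apply SeqContinuous.continuous
  intro ds d₀ hds
  obtain ⟨δ, hδ, hδ'⟩ := hmod (π d₀)
  have iρ : Integrable (fun a => ((ρ a (π d₀)).toNNReal : ℝ)) ν := by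
    refine aux_integrable_of_ofReal ?_ (fun a => NNReal.coe_nonneg _) ?_
    · exact (NNReal.continuous_coe.comp
        (continuous_real_toNNReal.comp (hca (π d₀)))).aestronglyMeasurable
    · have he : ∀ a : A, ENNReal.ofReal ((ρ a (π d₀)).toNNReal : ℝ)
          = ENNReal.ofReal (ρ a (π d₀)) := by
        intro a; rw [ENNReal.ofReal_coe_nnreal]; rfl
      simp_rw [he, aux_lint_rho_one hρprob (π d₀)]
      exact ENNReal.one_ne_top
  have ih : Integrable (fun a => h (π d₀) a) ν := by
    refine aux_integrable_of_ofReal ?_ (hh0 (π d₀)) ?_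
    · exact (hhmeas.comp measurable_prodMk_left).aestronglyMeasurable
    · exact ne_top_of_le_ne_top hM (hhM (π d₀))
  have ibound : Integrable (fun a => (((ρ a (π d₀)).toNNReal : ℝ) + h (π d₀) a) * Cg) ν :=
    (iρ.add ih).mul_const Cg
  have hπds : Tendsto (fun k => π (ds k)) atTop (𝓝 (π d₀)) :=
    (hπ.continuousAt).tendsto.comp hds
  have hev : ∀ᶠ k in atTop, dist (π (ds k)) (π d₀) < δ := Metric.tendsto_nhds.mp hπds δ hδ
  show Tendsto (fun k => ∫ a, ((ρ a (π (ds k))).toNNReal : ℝ) * g a (ds k) ∂ν) atTop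
    (𝓝 (∫ a, ((ρ a (π d₀)).toNNReal : ℝ) * g a d₀ ∂ν))
  apply tendsto_integral_filter_of_dominated_convergence _ ?_ ?_ ibound ?_
  · exact Filter.Eventually.of_forall fun k =>
      ((NNReal.continuous_coe.comp
        (continuous_real_toNNReal.comp (hca (π (ds k))))).mul (hgd (ds k))).aestronglyMeasurable
  · filter_upwards [hev] with k hk
    apply Filter.Eventually.of_forall
    intro a
    have habs := (abs_lt.mp (hδ' (π (ds k)) hk a)).2
    have h3 := hh0 (π d₀) a
    have h1 : ((ρ a (π (ds k))).toNNReal : ℝ) ≤ ((ρ a (π d₀)).toNNReal : ℝ) + h (π d₀) a := by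
      rw [Real.coe_toNNReal', Real.coe_toNNReal']
      apply max_le
      · calc ρ a (π (ds k)) ≤ ρ a (π d₀) + h (π d₀) a := by linarith
          _ ≤ max (ρ a (π d₀)) 0 + h (π d₀) a := by gcongr; exact le_max_left _ _
      · exact add_nonneg (le_max_right _ _) h3
    rw [Real.norm_eq_abs, abs_mul, abs_of_nonneg (NNReal.coe_nonneg _)]
    exact mul_le_mul h1 (hgb a (ds k)) (abs_nonneg _)
      (add_nonneg (NNReal.coe_nonneg _) h3)
  · apply Filter.Eventually.of_forall
    intro a
    have hcd : Continuous fun d : D => ((ρ a (π d)).toNNReal : ℝ) * g a d := by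
      apply Continuous.mul
      · exact NNReal.continuous_coe.comp (continuous_real_toNNReal.comp
          ((hρcont.comp (continuous_const.prodMk continuous_id)).comp hπ))
      · exact hgc.comp (continuous_const.prodMk continuous_id)
    exact (hcd.continuousAt).tendsto.comp hds

/-- If `μ_n(da,db,dc) = κ_n(b)(dc) ζ(da,db)` converges weakly to `μ₀` and
`ζ(da|b) = ρ(a,b)ν(da)` with `(ρ,ν)` satisfying Condition C1, then the limit `μ₀` also
disintegrates as `μ₀(da,db,dc) = κ₀(b)(dc) ζ(da,db)` for some Markov kernel `κ₀`. -/
theorem stmt_4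
    {A B C : Type*}
    [MetricSpace A] [CompleteSpace A] [SeparableSpace A] [MeasurableSpace A] [BorelSpace A]
    [MetricSpace B] [CompleteSpace B] [SeparableSpace B] [MeasurableSpace B] [BorelSpace B]
    [MetricSpace C] [CompleteSpace C] [SeparableSpace C] [MeasurableSpace C] [BorelSpace C]
    (ν : Measure A)
    (ρ : A → B → ℝ)
    (hρbdd : ∃ M : ℝ, ∀ a b, |ρ a b| ≤ M)
    (hρcont : Continuous (fun p : A × B => ρ p.1 p.2))
    (hρprob : ∀ b, IsProbabilityMeasure (ν.withDensity fun a => ENNReal.ofReal (ρ a b)))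
    (hC1 : CondC1 (fun (b : B) (a : A) => ρ a b) ν)
    (ζ : Measure (A × B)) (hζprob : IsProbabilityMeasure ζ)
    (hζdec : ζ = (ζ.map Prod.snd).bind
      (fun b => (ν.withDensity fun a => ENNReal.ofReal (ρ a b)).map (fun a => (a, b))))
    (κ : ℕ → Kernel B C) (hκ : ∀ n, IsMarkovKernel (κ n))
    (μ₀ : Measure (A × B × C)) (hμ₀ : IsProbabilityMeasure μ₀)
    (hconv : WeakConv
      (fun n => ζ.bind (fun p => ((κ n) p.2).map (fun c => (p.1, p.2, c)))) μ₀) :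
    ∃ κ₀ : Kernel B C, IsMarkovKernel κ₀ ∧
      μ₀ = ζ.bind (fun p => (κ₀ p.2).map (fun c => (p.1, p.2, c))) := by
  classical
  obtain ⟨hηcont, h, hh0, hhmeas, ⟨Cb, hCb⟩, ⟨M, hM, hhM⟩, hmodε⟩ := hC1
  have hmod : ∀ b₀ : B, ∃ δ : ℝ, 0 < δ ∧
      ∀ b : B, dist b b₀ < δ → ∀ a, |ρ a b - ρ a b₀| < 1 * h b₀ a := by
    intro b₀
    obtain ⟨δ, hδ, hd⟩ := hmodε 1 one_pos
    exact ⟨δ, hδ, fun b hb a => hd b₀ b hb a⟩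
  set ρν : B → Measure A := fun b => ν.withDensity fun a => ENNReal.ofReal (ρ a b) with hρνdef
  have hKmeas : Measurable ρν := aux_kernel_meas ν ρ hρcont hρprob h M hM hhM hmod
  let Kρ : Kernel B A := ⟨ρν, hKmeas⟩
  haveI hKρmarkov : IsMarkovKernel Kρ := ⟨fun b => hρprob b⟩
  haveI : IsProbabilityMeasure (ζ.map Prod.snd) :=
    Measure.isProbabilityMeasure_map measurable_snd.aemeasurable
  set ζB : Measure B := ζ.map Prod.snd with hζBdef
  set νBC : Measure (B × C) := μ₀.map Prod.snd with hνBCdef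
  haveI : IsProbabilityMeasure νBC := Measure.isProbabilityMeasure_map measurable_snd.aemeasurable
  -- the function G associated to a test function g
  have hGdef : ∀ g : BoundedContinuousFunction (A × B × C) ℝ,
      ∃ G : BoundedContinuousFunction (B × C) ℝ,
        ∀ q : B × C, G q = ∫ a, g (a, q.1, q.2) ∂(ρν q.1) := by
    intro g
    have hcont : Continuous fun q : B × C => ∫ a, g (a, q.1, q.2) ∂(ρν q.1) := by
      refine aux_G_cont ν ρ hρcont hρprob h hh0 hhmeas M hM hhM hmod
        (Prod.fst : B × C → B) continuous_fst (fun a q => g (a, q.1, q.2))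
        ?_ ‖g‖ (norm_nonneg g) ?_
      · exact g.continuous.comp (continuous_fst.prodMk
          ((continuous_fst.comp continuous_snd).prodMk (continuous_snd.comp continuous_snd)))
      · intro a d
        exact g.norm_coe_le_norm _
    have hbdd : ∀ q : B × C, ‖∫ a, g (a, q.1, q.2) ∂(ρν q.1)‖ ≤ ‖g‖ := by
      intro q
      haveI : IsProbabilityMeasure (ρν q.1) := hρprob q.1
      calc ‖∫ a, g (a, q.1, q.2) ∂(ρν q.1)‖
          ≤ ‖g‖ * ((ρν q.1) Set.univ).toReal := norm_integral_le_of_norm_le_const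
            (Filter.Eventually.of_forall fun a => g.norm_coe_le_norm _)
        _ = ‖g‖ := by simp
    exact ⟨BoundedContinuousFunction.ofNormedAddCommGroup _ hcont ‖g‖ hbdd, fun q => rfl⟩
  -- the core computation
  have core : ∀ (k : Kernel B C), IsMarkovKernel k →
      ∀ (g : BoundedContinuousFunction (A × B × C) ℝ)
        (G : BoundedContinuousFunction (B × C) ℝ),
        (∀ q : B × C, G q = ∫ a, g (a, q.1, q.2) ∂(ρν q.1)) →
        ∫ x, g x ∂(ζ.bind (fun p => (k p.2).map (fun c => (p.1, p.2, c))))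
          = ∫ q, G q ∂(ζB ⊗ₘ k) := by
    intro k hk g G hG
    haveI := hk
    set k' : Kernel (A × B) C := k.comap Prod.snd measurable_snd with hk'def
    haveI : IsMarkovKernel k' := Kernel.IsMarkovKernel.comap k measurable_snd
    have hE : Measurable fun q : (A × B) × C => (q.1.1, q.1.2, q.2) :=
      ((measurable_fst.comp measurable_fst).prodMk
        ((measurable_snd.comp measurable_fst).prodMk measurable_snd))
    have hEc : Continuous fun q : (A × B) × C => (q.1.1, q.1.2, q.2) :=
      ((continuous_fst.comp continuous_fst).prodMk
        ((continuous_snd.comp continuous_fst).prodMk continuous_snd))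
    have step1 : ζ.bind (fun p => (k p.2).map (fun c => (p.1, p.2, c)))
        = (ζ ⊗ₘ k').map (fun q : (A × B) × C => (q.1.1, q.1.2, q.2)) :=
      aux_bind_eq_compProd_map ζ k' (fun p c => (p.1, p.2, c)) hE
    have hgint : Integrable (fun q : (A × B) × C => g (q.1.1, q.1.2, q.2)) (ζ ⊗ₘ k') :=
      aux_integrable_bdd ((g.continuous.comp hEc).aestronglyMeasurable)
        (fun q => g.norm_coe_le_norm _)
    set f : A × B → ℝ := fun p => ∫ c, g (p.1, p.2, c) ∂(k p.2) with hfdef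
    have hfm : StronglyMeasurable f := by
      have hsm : StronglyMeasurable fun q : (A × B) × C => g (q.1.1, q.1.2, q.2) :=
        (g.continuous.comp hEc).stronglyMeasurable
      exact hsm.integral_kernel_prod_right' (κ := k')
    have hfb : ∀ p : A × B, ‖f p‖ ≤ ‖g‖ := by
      intro p
      calc ‖f p‖ ≤ ‖g‖ * ((k p.2) Set.univ).toReal := norm_integral_le_of_norm_le_const
            (Filter.Eventually.of_forall fun c => g.norm_coe_le_norm _)
        _ = ‖g‖ := by simp
    have step2 : ∫ x, g x ∂(ζ.bind (fun p => (k p.2).map (fun c => (p.1, p.2, c))))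
        = ∫ p, f p ∂ζ := by
      rw [step1, integral_map hE.aemeasurable g.continuous.aestronglyMeasurable,
        Measure.integral_compProd hgint]
      rfl
    have hswapE : Measurable fun q : B × A => (q.2, q.1) :=
      measurable_snd.prodMk measurable_fst
    have step3 : ζ = (ζB ⊗ₘ Kρ).map (fun q : B × A => (q.2, q.1)) := by
      conv_lhs => rw [hζdec]
      exact aux_bind_eq_compProd_map ζB Kρ (fun b a => (a, b)) hswapE
    have hint2 : Integrable (fun q : B × A => f (q.2, q.1)) (ζB ⊗ₘ Kρ) :=
      aux_integrable_bdd ((hfm.comp_measurable hswapE).aestronglyMeasurable)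
        (fun q => hfb _)
    have step4 : ∫ p, f p ∂ζ = ∫ b, ∫ a, f (a, b) ∂(ρν b) ∂ζB := by
      conv_lhs => rw [step3]
      rw [integral_map hswapE.aemeasurable hfm.aestronglyMeasurable,
        Measure.integral_compProd hint2]
      rfl
    have step5 : ∀ b : B, ∫ a, f (a, b) ∂(ρν b) = ∫ c, G (b, c) ∂(k b) := by
      intro b
      haveI : IsProbabilityMeasure (ρν b) := hρprob b
      have hint3 : Integrable (Function.uncurry fun a c => g (a, b, c))
          ((ρν b).prod (k b)) :=
        aux_integrable_bdd ((g.continuous.comp (continuous_fst.prodMk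
            (continuous_const.prodMk continuous_snd))).aestronglyMeasurable)
          (fun z => g.norm_coe_le_norm _)
      calc ∫ a, f (a, b) ∂(ρν b)
          = ∫ a, ∫ c, g (a, b, c) ∂(k b) ∂(ρν b) := rfl
        _ = ∫ c, ∫ a, g (a, b, c) ∂(ρν b) ∂(k b) := integral_integral_swap hint3
        _ = ∫ c, G (b, c) ∂(k b) :=
            integral_congr_ae (Filter.Eventually.of_forall fun c => (hG (b, c)).symm)
    have step6 : ∫ b, ∫ c, G (b, c) ∂(k b) ∂ζB = ∫ q, G q ∂(ζB ⊗ₘ k) :=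
      (Measure.integral_compProd (aux_integrable_bdd G.continuous.aestronglyMeasurable
        (fun q => G.norm_coe_le_norm q))).symm
    rw [step2, step4]
    rw [← step6]
    exact integral_congr_ae (Filter.Eventually.of_forall fun b => step5 b)
  have hEm : Measurable fun q : (A × B) × C => (q.1.1, q.1.2, q.2) :=
    ((measurable_fst.comp measurable_fst).prodMk
      ((measurable_snd.comp measurable_fst).prodMk measurable_snd))
  -- key limit identity
  have star : ∀ (g : BoundedContinuousFunction (A × B × C) ℝ)
      (G : BoundedContinuousFunction (B × C) ℝ),
      (∀ q : B × C, G q = ∫ a, g (a, q.1, q.2) ∂(ρν q.1)) →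
      ∫ x, g x ∂μ₀ = ∫ x, G x.2 ∂μ₀ := by
    intro g G hG
    set g' : BoundedContinuousFunction (A × B × C) ℝ :=
      G.compContinuous ⟨fun x : A × B × C => x.2, continuous_snd⟩ with hg'def
    have hg'coe : ∀ x : A × B × C, g' x = G x.2 := fun x => rfl
    have hG' : ∀ q : B × C, G q = ∫ a, g' (a, q.1, q.2) ∂(ρν q.1) := by
      intro q
      haveI : IsProbabilityMeasure (ρν q.1) := hρprob q.1
      have : ∀ a : A, g' (a, q.1, q.2) = G q := fun a => rfl
      simp [this]
    have h12 : ∀ n, ∫ x, g x ∂(ζ.bind (fun p => ((κ n) p.2).map (fun c => (p.1, p.2, c))))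
        = ∫ x, g' x ∂(ζ.bind (fun p => ((κ n) p.2).map (fun c => (p.1, p.2, c)))) := by
      intro n
      rw [core (κ n) (hκ n) g G hG, core (κ n) (hκ n) g' G hG']
    have t1 := hconv g
    have t2 := hconv g'
    rw [funext h12] at t1
    have := tendsto_nhds_unique t1 t2
    rw [this]
    exact integral_congr_ae (Filter.Eventually.of_forall fun x => hg'coe x)
  -- identification of the B × C marginal's first component
  have hfst : νBC.fst = ζB := by
    haveI : IsProbabilityMeasure νBC.fst := by
      rw [Measure.fst]
      exact Measure.isProbabilityMeasure_map measurable_fst.aemeasurable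
    apply aux_ext_bcf
    intro ff
    set gf : BoundedContinuousFunction (A × B × C) ℝ :=
      ff.compContinuous ⟨fun x : A × B × C => x.2.1,
        continuous_fst.comp continuous_snd⟩ with hgfdef
    set Gf : BoundedContinuousFunction (B × C) ℝ :=
      ff.compContinuous ⟨fun q : B × C => q.1, continuous_fst⟩ with hGfdef
    have hGf : ∀ q : B × C, Gf q = ∫ a, gf (a, q.1, q.2) ∂(ρν q.1) := by
      intro q
      haveI : IsProbabilityMeasure (ρν q.1) := hρprob q.1
      have : ∀ a : A, gf (a, q.1, q.2) = ff q.1 := fun a => rfl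
      simp [this]
      rfl
    have h2 : ∀ n, ∫ x, gf x ∂(ζ.bind (fun p => ((κ n) p.2).map (fun c => (p.1, p.2, c))))
        = ∫ b, ff b ∂ζB := by
      intro n
      haveI := hκ n
      rw [core (κ n) (hκ n) gf Gf hGf,
        Measure.integral_compProd (aux_integrable_bdd Gf.continuous.aestronglyMeasurable
          (fun q => Gf.norm_coe_le_norm q))]
      have : ∀ b : B, ∫ c, Gf (b, c) ∂((κ n) b) = ff b := by
        intro b
        have hc : ∀ c : C, Gf (b, c) = ff b := fun c => rfl
        simp [hc]
      exact integral_congr_ae (Filter.Eventually.of_forall this)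
    have t1 := hconv gf
    rw [funext h2] at t1
    have hlim := tendsto_nhds_unique t1 tendsto_const_nhds
    -- hlim : ∫ x, gf x ∂μ₀ = ∫ b, ff b ∂ζB
    have hleft : ∫ x, ff x ∂νBC.fst = ∫ x, gf x ∂μ₀ := by
      rw [Measure.fst, hνBCdef, Measure.map_map measurable_fst measurable_snd,
        integral_map (measurable_fst.comp measurable_snd).aemeasurable
          ff.continuous.aestronglyMeasurable]
      rfl
    rw [hleft, hlim]
  have hABCne : Nonempty (A × B × C) := by
    by_contra hne
    have hempty : (Set.univ : Set (A × B × C)) = ∅ := by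
      rw [Set.univ_eq_empty_iff]
      exact not_nonempty_iff.mp hne
    have h1 := hμ₀.measure_univ
    rw [hempty, measure_empty] at h1
    exact zero_ne_one h1
  haveI : Nonempty C := ⟨hABCne.some.2.2⟩
  set κ₀ : Kernel B C := νBC.condKernel with hκ₀def
  haveI hκ₀markov : IsMarkovKernel κ₀ := by
    rw [hκ₀def]; infer_instance
  have hdis : ζB ⊗ₘ κ₀ = νBC := by
    rw [← hfst, hκ₀def]
    exact νBC.disintegrate _
  clear_value κ₀
  refine ⟨κ₀, hκ₀markov, ?_⟩
  have hμ'eq : ζ.bind (fun p => (κ₀ p.2).map (fun c => (p.1, p.2, c)))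
      = (ζ ⊗ₘ κ₀.comap Prod.snd measurable_snd).map
        (fun q : (A × B) × C => (q.1.1, q.1.2, q.2)) :=
    aux_bind_eq_compProd_map ζ (κ₀.comap Prod.snd measurable_snd) (fun p c => (p.1, p.2, c)) hEm
  haveI : IsProbabilityMeasure (ζ.bind (fun p => (κ₀ p.2).map (fun c => (p.1, p.2, c)))) := by
    rw [hμ'eq]
    exact Measure.isProbabilityMeasure_map hEm.aemeasurable
  apply aux_ext_bcf
  intro g
  obtain ⟨G, hG⟩ := hGdef g
  have h1 : ∫ x, g x ∂(ζ.bind (fun p => (κ₀ p.2).map (fun c => (p.1, p.2, c))))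
      = ∫ q, G q ∂(ζB ⊗ₘ κ₀) := core κ₀ hκ₀markov g G hG
  have h2 : ∫ q, G q ∂(ζB ⊗ₘ κ₀) = ∫ x, G x.2 ∂μ₀ := by
    rw [hdis, hνBCdef, integral_map measurable_snd.aemeasurable
      G.continuous.aestronglyMeasurable]
  rw [star g G hG, ← h2, ← h1]
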